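/- Suppose f(α) = α + g(α) where g : ℝ → ℝ is C² with ‖g‖_{C²} ≤ 1/2. Then f is a bijection of ℝ and its inverse satisfies f^{-1}(ξ) = ξ - g(ξ) + g(ξ)g'(ξ) + E(ξ), where |E(ξ)| ≤ C(‖g'‖_{L^∞}² ‖g‖_{L^∞} + ‖g‖_{L^∞}² ‖g''‖_{L^∞}) uniformly in ξ. -/

import Mathlib

private lemma lipAux (h : ℝ → ℝ) (hd : Differentiable ℝ h) (K : ℝ)
    (hK : ∀ x, |deriv h x| ≤ K) (a b : ℝ) : |h b - h a| ≤ K * |b - a| := by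
  have := convex_univ.norm_image_sub_le_of_norm_hasDerivWithin_le
    (f := h) (f' := deriv h) (C := K)
    (fun x _ => ((hd x).hasDerivAt).hasDerivWithinAt)
    (fun x _ => by simpa [Real.norm_eq_abs] using hK x)
    (Set.mem_univ a) (Set.mem_univ b)
  simpa [Real.norm_eq_abs] using this

/-- If `f(α) = α + g(α)` with `‖g‖_{C²} ≤ 1/2`, then `f` is a bijection of `ℝ` and
`f⁻¹(ξ) = ξ - g(ξ) + g(ξ) g'(ξ) + E(ξ)` with
`|E| ≤ C (‖g'‖_∞² ‖g‖_∞ + ‖g‖_∞² ‖g''‖_∞)` uniformly, for an absolute constant `C`. -/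
theorem inverse_expansion :
    ∃ C > (0 : ℝ), ∀ g : ℝ → ℝ, ContDiff ℝ 2 g →
      ∀ Mg Mg' Mg'' : ℝ,
        (∀ x, |g x| ≤ Mg) → (∀ x, |deriv g x| ≤ Mg') →
        (∀ x, |deriv (deriv g) x| ≤ Mg'') →
        Mg ≤ 1 / 2 → Mg' ≤ 1 / 2 → Mg'' ≤ 1 / 2 →
        Function.Bijective (fun α : ℝ => α + g α) ∧
          ∀ ξ : ℝ,
            |Function.invFun (fun α : ℝ => α + g α) ξ
                - (ξ - g ξ + g ξ * deriv g ξ)|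
              ≤ C * (Mg' ^ 2 * Mg + Mg ^ 2 * Mg'') := by
  refine ⟨2, by norm_num, ?_⟩
  intro g hg Mg Mg' Mg'' hMg hMg' hMg'' hMg2 hMg'2 hMg''2
  set f : ℝ → ℝ := fun α : ℝ => α + g α with hf
  have hgd : Differentiable ℝ g := hg.differentiable two_ne_zero
  have hg'd : Differentiable ℝ (deriv g) := by
    have h2 : ContDiff ℝ ((1 : ℕ∞) + 1) g := by exact_mod_cast hg
    exact ((contDiff_succ_iff_deriv.mp h2).2.2).differentiable (by simp)
  have hMg0 : 0 ≤ Mg := le_trans (abs_nonneg _) (hMg 0)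
  have hMg'0 : 0 ≤ Mg' := le_trans (abs_nonneg _) (hMg' 0)
  have hMg''0 : 0 ≤ Mg'' := le_trans (abs_nonneg _) (hMg'' 0)
  have hfd : ∀ x, HasDerivAt f (1 + deriv g x) x := fun x =>
    (hasDerivAt_id x).add ((hgd x).hasDerivAt)
  have hmono : StrictMono f := by
    apply strictMono_of_deriv_pos
    intro x
    rw [(hfd x).deriv]
    have := abs_le.mp (hMg' x)
    linarith
  have hcont : Continuous f := continuous_id.add hgd.continuous
  have hsurj : Function.Surjective f := by
    intro ξ
    have h1 : f (ξ - 1) ≤ ξ := by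
      have := abs_le.mp (hMg (ξ - 1)); simp only [hf]; linarith
    have h2 : ξ ≤ f (ξ + 1) := by
      have := abs_le.mp (hMg (ξ + 1)); simp only [hf]; linarith
    have hle : ξ - 1 ≤ ξ + 1 := by linarith
    have := intermediate_value_Icc hle hcont.continuousOn
    obtain ⟨α, _, hα⟩ := this ⟨h1, h2⟩
    exact ⟨α, hα⟩
  have hbij : Function.Bijective f := ⟨hmono.injective, hsurj⟩
  refine ⟨hbij, ?_⟩
  intro ξ
  set α := Function.invFun f ξ with hα
  have hfα : α + g α = ξ := Function.rightInverse_invFun hsurj ξ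
  -- |α - ξ| ≤ Mg
  have hαξ : |α - ξ| ≤ Mg := by
    have : α - ξ = -(g α) := by linarith
    rw [this, abs_neg]; exact hMg α
  -- Lipschitz bound for g
  have hS : |g α - g ξ| ≤ Mg' * Mg :=
    le_trans (lipAux g hgd Mg' hMg' ξ α)
      (by nlinarith)
  -- second order Taylor bound on segment
  have hT : |g α - g ξ - deriv g ξ * (α - ξ)| ≤ Mg'' * Mg * Mg := by
    set s := segment ℝ ξ α with hs
    have hseg : ∀ x ∈ s, |x - ξ| ≤ |α - ξ| := by
      rintro x ⟨a, b, ha, hb, hab, rfl⟩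
      have : a • ξ + b • α - ξ = b * (α - ξ) := by
        simp only [smul_eq_mul]; linear_combination ξ * hab
      rw [this, abs_mul, abs_of_nonneg hb]
      nlinarith [abs_nonneg (α - ξ)]
    have hderiv : ∀ x ∈ s, HasDerivWithinAt (fun y => g y - deriv g ξ * y)
        (deriv g x - deriv g ξ) s x := fun x _ =>
      by simpa [Pi.sub_def] using ((((hgd x).hasDerivAt).sub ((hasDerivAt_id x).const_mul (deriv g ξ))).hasDerivWithinAt (s := s))
    have hbound : ∀ x ∈ s, ‖deriv g x - deriv g ξ‖ ≤ Mg'' * |α - ξ| := by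
      intro x hx
      rw [Real.norm_eq_abs]
      calc |deriv g x - deriv g ξ| ≤ Mg'' * |x - ξ| := lipAux (deriv g) hg'd Mg'' hMg'' ξ x
        _ ≤ Mg'' * |α - ξ| := by nlinarith [hseg x hx, abs_nonneg (x - ξ)]
    have := (convex_segment ξ α).norm_image_sub_le_of_norm_hasDerivWithin_le
      hderiv hbound (left_mem_segment ℝ ξ α) (right_mem_segment ℝ ξ α)
    rw [Real.norm_eq_abs, Real.norm_eq_abs] at this
    calc |g α - g ξ - deriv g ξ * (α - ξ)|
        = |(g α - deriv g ξ * α) - (g ξ - deriv g ξ * ξ)| := by ring_nf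
      _ ≤ Mg'' * |α - ξ| * |α - ξ| := this
      _ ≤ Mg'' * Mg * Mg := by
          nlinarith [mul_le_mul hαξ hαξ (abs_nonneg (α - ξ)) hMg0, hMg''0,
            mul_le_mul_of_nonneg_left (mul_le_mul hαξ hαξ (abs_nonneg (α - ξ)) hMg0) hMg''0]
  have hkey : α - (ξ - g ξ + g ξ * deriv g ξ)
      = -(g α - g ξ - deriv g ξ * (α - ξ)) + deriv g ξ * (g α - g ξ) := by
    linear_combination (1 - deriv g ξ) * hfα
  rw [hkey]
  calc |(-(g α - g ξ - deriv g ξ * (α - ξ))) + deriv g ξ * (g α - g ξ)|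
      ≤ |g α - g ξ - deriv g ξ * (α - ξ)| + |deriv g ξ| * |g α - g ξ| := by
        rw [← abs_neg (g α - g ξ - deriv g ξ * (α - ξ)), ← abs_mul]
        exact abs_add_le _ _
    _ ≤ Mg'' * Mg * Mg + Mg' * (Mg' * Mg) := by
        have := hMg' ξ
        have h1 : |deriv g ξ| * |g α - g ξ| ≤ Mg' * (Mg' * Mg) := by
          nlinarith [abs_nonneg (deriv g ξ), abs_nonneg (g α - g ξ)]
        linarith
    _ ≤ 2 * (Mg' ^ 2 * Mg + Mg ^ 2 * Mg'') := by nlinarith
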